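/- The discrete Gaussian has variance at most that of the corresponding continuous Gaussian: For every real σ > 0, if X is distributed according to the discrete Gaussian N_ℤ(σ²), then X has mean 0 and Var(X) = E[X²] ≤ σ². -/

import Mathlib

open Real

-- summability of |n|^k * exp(-b n^2) over ℤ
lemma summable_pow_mul_exp_neg_int_sq {b : ℝ} (hb : 0 < b) (k : ℕ) :
    Summable (fun n : ℤ => |(n : ℝ)| ^ k * Real.exp (-b * (n : ℝ) ^ 2)) := by
  have hgeo : Summable (fun m : ℕ => (m : ℝ) ^ k * Real.exp (-b) ^ m) := by
    apply summable_pow_mul_geometric_of_norm_lt_one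
    rw [Real.norm_eq_abs, abs_of_pos (Real.exp_pos _)]
    exact Real.exp_lt_one_iff.mpr (by linarith)
  have hgeo' : Summable (fun m : ℕ => (m : ℝ) ^ k * Real.exp (-b * m)) := by
    simpa [← Real.exp_nat_mul, mul_comm] using hgeo
  have key : Summable (fun n : ℤ => |(n : ℝ)| ^ k * Real.exp (-b * |(n : ℝ)|)) := by
    apply Summable.of_nat_of_neg <;> simpa using hgeo'
  apply key.of_nonneg_of_le
  · intro n
    positivity
  · intro n
    apply mul_le_mul_of_nonneg_left _ (by positivity)
    apply Real.exp_le_exp.mpr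
    rw [neg_mul, neg_mul, neg_le_neg_iff]
    apply mul_le_mul_of_nonneg_left _ hb.le
    rw [← sq_abs]
    rcases eq_or_ne n 0 with h | h
    · simp [h]
    · have h1 : (1 : ℝ) ≤ |(n : ℝ)| := by
        rw [← Int.cast_abs]; exact_mod_cast Int.one_le_abs (by exact_mod_cast h)
      nlinarith [abs_nonneg (n : ℝ)]

noncomputable def Ftheta (b : ℝ) : ℝ := ∑' n : ℤ, Real.exp (-b * (n : ℝ) ^ 2)

noncomputable def Gtheta (b : ℝ) : ℝ := ∑' n : ℤ, (n : ℝ) ^ 2 * Real.exp (-b * (n : ℝ) ^ 2)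

lemma summable_F {b : ℝ} (hb : 0 < b) :
    Summable (fun n : ℤ => Real.exp (-b * (n : ℝ) ^ 2)) := by
  simpa using summable_pow_mul_exp_neg_int_sq hb 0

lemma summable_G {b : ℝ} (hb : 0 < b) :
    Summable (fun n : ℤ => (n : ℝ) ^ 2 * Real.exp (-b * (n : ℝ) ^ 2)) := by
  simpa [sq_abs] using summable_pow_mul_exp_neg_int_sq hb 2

lemma Gtheta_nonneg {b : ℝ} : 0 ≤ Gtheta b :=
  tsum_nonneg fun n => by positivity

lemma hasDerivAt_Ftheta {b : ℝ} (hb : 0 < b) :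
    HasDerivAt Ftheta (-Gtheta b) b := by
  have key : HasDerivAt (fun y => ∑' n : ℤ, Real.exp (-y * (n : ℝ) ^ 2))
      (∑' n : ℤ, -((n : ℝ) ^ 2 * Real.exp (-b * (n : ℝ) ^ 2))) b := by
    apply hasDerivAt_tsum_of_isPreconnected
      (u := fun n : ℤ => (n : ℝ) ^ 2 * Real.exp (-(b/2) * (n : ℝ) ^ 2))
      (summable_G (by linarith)) isOpen_Ioi (isPreconnected_Ioi) (t := Set.Ioi (b/2))
      (g' := fun n y => -((n : ℝ) ^ 2 * Real.exp (-y * (n : ℝ) ^ 2)))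
    · intro n y hy
      have h1 : HasDerivAt (fun y : ℝ => -y * (n : ℝ) ^ 2) (-(n : ℝ) ^ 2) y := by
        simpa using ((hasDerivAt_id y).neg.mul_const ((n : ℝ) ^ 2))
      simpa [mul_comm, neg_mul] using h1.exp
    · intro n y hy
      rw [Real.norm_eq_abs, abs_neg, abs_of_nonneg (by positivity)]
      apply mul_le_mul_of_nonneg_left _ (by positivity)
      apply Real.exp_le_exp.mpr
      have : b/2 < y := hy
      nlinarith [sq_nonneg (n : ℝ)]
    · show b ∈ Set.Ioi (b/2); simp; linarith
    · exact summable_F hb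
    · show b ∈ Set.Ioi (b/2); simp; linarith
  have := (summable_G hb)
  rw [tsum_neg] at key
  exact key

lemma Ftheta_transform {b : ℝ} (hb : 0 < b) :
    Ftheta b = Real.sqrt π / Real.sqrt b * Ftheta (π ^ 2 / b) := by
  have ha : 0 < b / π := div_pos hb Real.pi_pos
  have := Real.tsum_exp_neg_mul_int_sq ha
  have h1 : ∀ n : ℤ, -π * (b / π) * (n : ℝ) ^ 2 = -b * (n : ℝ) ^ 2 := by
    intro n; field_simp
  have h2 : ∀ n : ℤ, -π / (b / π) * (n : ℝ) ^ 2 = -(π ^ 2 / b) * (n : ℝ) ^ 2 := by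
    intro n; rw [div_div_eq_mul_div, div_mul_eq_mul_div, neg_mul]; ring_nf
  simp only [h1, h2] at this
  rw [Ftheta, Ftheta, this]
  congr 1
  rw [← Real.sqrt_eq_rpow, Real.sqrt_div hb.le, one_div_div]


lemma Ftheta_nonneg {b : ℝ} : 0 ≤ Ftheta b := tsum_nonneg fun n => (Real.exp_pos _).le

lemma Gtheta_le {b : ℝ} (hb : 0 < b) : Gtheta b ≤ Ftheta b / (2 * b) := by
  have hc : 0 < π ^ 2 / b := by positivity
  have hsb : Real.sqrt b ≠ 0 := by positivity
  have hA : HasDerivAt (fun y : ℝ => Real.sqrt π / Real.sqrt y)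
      ((0 * Real.sqrt b - Real.sqrt π * (1 / (2 * Real.sqrt b))) / (Real.sqrt b) ^ 2) b :=
    (hasDerivAt_const b (Real.sqrt π)).div (Real.hasDerivAt_sqrt hb.ne') hsb
  have hinner : HasDerivAt (fun y : ℝ => π ^ 2 / y) (π ^ 2 * (-((b ^ 2)⁻¹))) b := by
    simpa [div_eq_mul_inv] using (hasDerivAt_inv hb.ne').const_mul (π ^ 2)
  have hB : HasDerivAt (fun y : ℝ => Ftheta (π ^ 2 / y))
      (-Gtheta (π ^ 2 / b) * (π ^ 2 * (-((b ^ 2)⁻¹)))) b :=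
    (hasDerivAt_Ftheta hc).comp b hinner
  have hH := hA.mul hB
  have heq : Ftheta =ᶠ[nhds b]
      (fun y => Real.sqrt π / Real.sqrt y * Ftheta (π ^ 2 / y)) := by
    filter_upwards [Ioi_mem_nhds hb] with y hy
    exact Ftheta_transform hy
  have hF' := hH.congr_of_eventuallyEq heq
  have huniq := (hasDerivAt_Ftheta hb).unique hF'
  have hFb : Ftheta b = Real.sqrt π / Real.sqrt b * Ftheta (π ^ 2 / b) := Ftheta_transform hb
  have hsq : (Real.sqrt b) ^ 2 = b := Real.sq_sqrt hb.le
  have hGc : 0 ≤ Gtheta (π ^ 2 / b) := Gtheta_nonneg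
  have hFc : 0 ≤ Ftheta (π ^ 2 / b) := Ftheta_nonneg
  have hsbp : 0 < Real.sqrt b := Real.sqrt_pos.mpr hb
  have hspp : 0 < Real.sqrt π := Real.sqrt_pos.mpr Real.pi_pos
  rw [hsq] at huniq
  have hterm : 0 ≤ Real.sqrt π / Real.sqrt b *
      (Gtheta (π ^ 2 / b) * (π ^ 2 * ((b ^ 2)⁻¹))) := by positivity
  have key : Gtheta b ≤ Real.sqrt π * (1 / (2 * Real.sqrt b)) / b * Ftheta (π ^ 2 / b) := by
    have : -Gtheta (π ^ 2 / b) * (π ^ 2 * -((b ^ 2)⁻¹)) =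
        Gtheta (π ^ 2 / b) * (π ^ 2 * ((b ^ 2)⁻¹)) := by ring
    rw [this] at huniq
    have hring : (0 * Real.sqrt b - Real.sqrt π * (1 / (2 * Real.sqrt b))) / b *
        Ftheta (π ^ 2 / b) =
        -(Real.sqrt π * (1 / (2 * Real.sqrt b)) / b * Ftheta (π ^ 2 / b)) := by ring
    rw [hring] at huniq
    linarith [huniq, hterm]
  have heq2 : Real.sqrt π * (1 / (2 * Real.sqrt b)) / b * Ftheta (π ^ 2 / b) =
      Real.sqrt π / Real.sqrt b * Ftheta (π ^ 2 / b) / (2 * b) := by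
    field_simp
  rw [hFb]
  linarith [key, heq2]

/-- The discrete Gaussian mass function `N_ℤ(v)` (real-valued) with variance
parameter `v = σ²`. -/
noncomputable def discreteGaussianPMF (v : ℝ) (x : ℤ) : ℝ :=
  Real.exp (-(x : ℝ) ^ 2 / (2 * v)) / ∑' y : ℤ, Real.exp (-(y : ℝ) ^ 2 / (2 * v))

/-- The discrete Gaussian `N_ℤ(σ²)` has mean `0` and variance
`Var(X) = E[X²]` at most `σ²`. -/
theorem discreteGaussian_variance_le (σ : ℝ) (hσ : 0 < σ) :
    (∑' x : ℤ, (x : ℝ) * discreteGaussianPMF (σ ^ 2) x) = 0 ∧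
    (∑' x : ℤ, (x : ℝ) ^ 2 * discreteGaussianPMF (σ ^ 2) x) ≤ σ ^ 2 := by
  have hb : 0 < 1 / (2 * σ ^ 2) := by positivity
  have hexp : ∀ x : ℤ, Real.exp (-(x : ℝ) ^ 2 / (2 * σ ^ 2)) =
      Real.exp (-(1 / (2 * σ ^ 2)) * (x : ℝ) ^ 2) := by
    intro x; congr 1; field_simp
  have hZ : (∑' y : ℤ, Real.exp (-(y : ℝ) ^ 2 / (2 * σ ^ 2))) = Ftheta (1 / (2 * σ ^ 2)) :=
    tsum_congr hexp
  have hZpos : 0 < Ftheta (1 / (2 * σ ^ 2)) := by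
    refine Summable.tsum_pos (summable_F hb) (fun n => (Real.exp_pos _).le) 0 ?_
    simp [Real.exp_pos]
  constructor
  · have hsym : ∀ x : ℤ, discreteGaussianPMF (σ ^ 2) (-x) = discreteGaussianPMF (σ ^ 2) x := by
      intro x; unfold discreteGaussianPMF; push_cast; rw [neg_sq]
    have h1 : (∑' x : ℤ, (x : ℝ) * discreteGaussianPMF (σ ^ 2) x) =
        ∑' x : ℤ, ((-x : ℤ) : ℝ) * discreteGaussianPMF (σ ^ 2) (-x) :=
      ((Equiv.neg ℤ).tsum_eq (fun x : ℤ => (x : ℝ) * discreteGaussianPMF (σ ^ 2) x)).symm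
    have h2 : (∑' x : ℤ, ((-x : ℤ) : ℝ) * discreteGaussianPMF (σ ^ 2) (-x)) =
        ∑' x : ℤ, -((x : ℝ) * discreteGaussianPMF (σ ^ 2) x) := by
      apply tsum_congr; intro x; rw [hsym]; push_cast; ring
    rw [h2, tsum_neg] at h1
    linarith
  · have hrw : (∑' x : ℤ, (x : ℝ) ^ 2 * discreteGaussianPMF (σ ^ 2) x) =
        Gtheta (1 / (2 * σ ^ 2)) / Ftheta (1 / (2 * σ ^ 2)) := by
      have hterm : ∀ x : ℤ, (x : ℝ) ^ 2 * discreteGaussianPMF (σ ^ 2) x =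
          ((x : ℝ) ^ 2 * Real.exp (-(1 / (2 * σ ^ 2)) * (x : ℝ) ^ 2)) /
            Ftheta (1 / (2 * σ ^ 2)) := by
        intro x; unfold discreteGaussianPMF
        rw [hZ, hexp x, mul_div_assoc]
      rw [tsum_congr hterm, tsum_div_const]; rfl
    rw [hrw, div_le_iff₀ hZpos]
    have hle := Gtheta_le hb
    have : Ftheta (1 / (2 * σ ^ 2)) / (2 * (1 / (2 * σ ^ 2))) =
        σ ^ 2 * Ftheta (1 / (2 * σ ^ 2)) := by
      field_simp
    linarith [hle, this.symm ▸ hle]
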